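/- Let M be a real n×n matrix and N a real m×n matrix, and let 𝓜 be the (n+m)×(n+m) block matrix [[M, 0],[N, 0]]. Then for every τ ∈ ℝ, exp(τ·𝓜) equals the block matrix [[exp(τ·M), 0],[∫₀^τ N·exp(s·M) ds, I_m]], where the integral is the entrywise integral of the matrix-valued function s ↦ N·exp(s·M) and I_m is the m×m identity. -/

import Mathlib

open NormedSpace

section aux

attribute [local instance] Matrix.linftyOpNormedAddCommGroup Matrix.linftyOpNormedSpace
  Matrix.linftyOpNormedRing Matrix.linftyOpNormedAlgebra

variable (n m : ℕ)

noncomputable def Lmap : (Matrix (Fin n) (Fin n) ℝ × Matrix (Fin m) (Fin n) ℝ)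
    →L[ℝ] Matrix (Fin n ⊕ Fin m) (Fin n ⊕ Fin m) ℝ :=
  LinearMap.toContinuousLinearMap
  { toFun := fun p => Matrix.fromBlocks p.1 0 p.2 0
    map_add' := by intro p q; simp [Matrix.fromBlocks_add]
    map_smul' := by intro c p; simp [Matrix.fromBlocks_smul] }

noncomputable def entryCLM (i : Fin m) (j : Fin n) : Matrix (Fin m) (Fin n) ℝ →L[ℝ] ℝ :=
  LinearMap.toContinuousLinearMap
  { toFun := fun A => A i j
    map_add' := fun _ _ => rfl
    map_smul' := fun _ _ => rfl }

theorem aux_main (M : Matrix (Fin n) (Fin n) ℝ) (N : Matrix (Fin m) (Fin n) ℝ) :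
    ∀ τ : ℝ,
      NormedSpace.exp (τ • (Matrix.fromBlocks M 0 N 0 : Matrix (Fin n ⊕ Fin m) (Fin n ⊕ Fin m) ℝ))
        = Matrix.fromBlocks (NormedSpace.exp (τ • M)) 0
            (Matrix.of fun i j => ∫ s in (0:ℝ)..τ, (N * NormedSpace.exp (s • M)) i j)
            (1 : Matrix (Fin m) (Fin m) ℝ) := by
  set A : Matrix (Fin n ⊕ Fin m) (Fin n ⊕ Fin m) ℝ := Matrix.fromBlocks M 0 N 0 with hA
  set f : ℝ → Matrix (Fin m) (Fin n) ℝ := fun s => N * exp (s • M) with hf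
  have hfc : Continuous f :=
    Continuous.matrix_mul continuous_const
      (exp_continuous.comp (continuous_id.smul continuous_const))
  set B : ℝ → Matrix (Fin m) (Fin n) ℝ := fun τ => ∫ s in (0:ℝ)..τ, f s with hB
  have hBent : ∀ (τ : ℝ) i j, B τ i j = ∫ s in (0:ℝ)..τ, f s i j := by
    intro τ i j
    have h := ((entryCLM n m i j).intervalIntegral_comp_comm
      (hfc.intervalIntegrable (μ := MeasureTheory.volume) 0 τ)).symm
    exact h
  set Φ : ℝ → Matrix (Fin n ⊕ Fin m) (Fin n ⊕ Fin m) ℝ :=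
    fun t => Matrix.fromBlocks (exp (t • M)) 0 (B t) 1 with hΦdef
  have hΦ : ∀ τ : ℝ, HasDerivAt Φ (A * Φ τ) τ := by
    intro τ
    have h1 : HasDerivAt (fun t : ℝ => exp (t • M)) (M * exp (τ • M)) τ :=
      hasDerivAt_exp_smul_const' M τ
    have h2 : HasDerivAt B (f τ) τ :=
      (hfc.integral_hasStrictDerivAt 0 τ).hasDerivAt
    have h3 := ((Lmap n m).hasFDerivAt.comp_hasDerivAt τ (h1.prodMk h2)).add_const
        (Matrix.fromBlocks 0 0 0 1 : Matrix (Fin n ⊕ Fin m) (Fin n ⊕ Fin m) ℝ)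
    have hfun : (fun t : ℝ => Lmap n m (exp (t • M), B t) + Matrix.fromBlocks 0 0 0 1) = Φ := by
      funext t
      show Matrix.fromBlocks (exp (t • M)) 0 (B t) 0 + Matrix.fromBlocks 0 0 0 1 = _
      simp [Matrix.fromBlocks_add, hΦdef]
    have hder : Lmap n m (M * exp (τ • M), f τ) = A * Φ τ := by
      show Matrix.fromBlocks (M * exp (τ • M)) 0 (f τ) 0 = _
      simp [hA, hΦdef, Matrix.fromBlocks_multiply, hf]
    have h3' : HasDerivAt (fun t => (Lmap n m) (exp (t • M), B t) + Matrix.fromBlocks 0 0 0 1)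
        ((Lmap n m) (M * exp (τ • M), f τ)) τ := h3
    rw [hder, hfun] at h3'
    exact h3'
  have hg : ∀ τ : ℝ, HasDerivAt (fun t => exp (t • (-A)) * Φ t) 0 τ := by
    intro τ
    have h4 : HasDerivAt (fun t : ℝ => exp (t • (-A))) (exp (τ • (-A)) * (-A)) τ :=
      hasDerivAt_exp_smul_const (-A) τ
    have h5 := h4.mul (hΦ τ)
    have : exp (τ • (-A)) * (-A) * Φ τ + exp (τ • (-A)) * (A * Φ τ) = 0 := by
      rw [mul_neg, neg_mul, mul_assoc, neg_add_cancel]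
    rwa [this] at h5
  have hgconst : ∀ τ : ℝ, exp (τ • (-A)) * Φ τ = 1 := by
    intro τ
    have hc := is_const_of_deriv_eq_zero (f := fun t => exp (t • (-A)) * Φ t)
      (fun x => (hg x).differentiableAt) (fun x => (hg x).deriv) τ 0
    rw [hc]
    simp [hΦdef, hB, Matrix.fromBlocks_one]
  intro τ
  have h5 : exp (τ • A) * exp (τ • (-A)) = 1 := by
    rw [smul_neg, ← Matrix.exp_add_of_commute (τ • A) (-(τ • A)) (Commute.neg_right (Commute.refl _)),
      add_neg_cancel, NormedSpace.exp_zero]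
  have key : exp (τ • A) = Φ τ := by
    calc exp (τ • A) = exp (τ • A) * (exp (τ • (-A)) * Φ τ) := by
          rw [hgconst τ, mul_one]
      _ = (exp (τ • A) * exp (τ • (-A))) * Φ τ := (mul_assoc _ _ _).symm
      _ = Φ τ := by rw [h5, one_mul]
  rw [key]
  have : (Matrix.of fun i j => ∫ s in (0:ℝ)..τ, (N * exp (s • M)) i j) = B τ := by
    ext i j
    rw [hBent]
    rfl
  rw [hΦdef, this]

end aux

/-- For `𝓜 = [[M, 0],[N, 0]]` (with `M` an `n×n` matrix and `N` an
`m×n` matrix), the matrix exponential is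
`exp(τ𝓜) = [[exp(τM), 0],[∫₀^τ N·exp(sM) ds, I]]`, where the integral is entrywise. -/
theorem block_exponential_with_integral_block
    (n m : ℕ) (M : Matrix (Fin n) (Fin n) ℝ) (N : Matrix (Fin m) (Fin n) ℝ)
    (𝓜 : Matrix (Fin n ⊕ Fin m) (Fin n ⊕ Fin m) ℝ)
    (h𝓜 : 𝓜 = Matrix.fromBlocks M 0 N 0) :
    ∀ τ : ℝ,
      NormedSpace.exp (τ • 𝓜)
        = Matrix.fromBlocks (NormedSpace.exp (τ • M)) 0
            (Matrix.of fun i j => ∫ s in (0:ℝ)..τ, (N * NormedSpace.exp (s • M)) i j)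
            (1 : Matrix (Fin m) (Fin m) ℝ) := by
  subst h𝓜
  exact aux_main n m M N
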